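/- Let q_1,…,q_s ∈ ℂ[x,y] be nonzero homogeneous binary forms, q_i = Σ_{j=0}^{n_i} A_j^{(i)} x^{n_i−j} y^j of degree n_i ≥ 1, let n_* = min_i n_i, n^* = max_i n_i, and let m be an integer with 1 ≤ m ≤ n_*. Then the forms q_1,…,q_s have a common divisor in ℂ[x,y] that is homogeneous of degree ≥ m if and only if the resultant matrix R_{n^* + n_* − m} has rank strictly less than n_* + n^* − 2m + 2. -/

import Mathlib

/-- The coefficient of `x^a y^b` in a binary form `q ∈ ℂ[x,y]`. -/
noncomputable def coeffOf (q : MvPolynomial (Fin 2) ℂ) (a b : ℕ) : ℂ :=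
  MvPolynomial.coeff (Finsupp.single 0 a + Finsupp.single 1 b) q

/-- The resultant matrix `R_l` of the binary forms `q i` of (formal) degrees `n i`:
for each `i` there is a block of rows indexed by `t = 0, …, l - n i`, with columns
indexed by `c = 0, …, l`; the `(t,c)`-entry is `A^{(i)}_{c-t}`, the coefficient of
`x^{n i - (c-t)} y^{c-t}` in `q i` (interpreted as `0` when `c-t ∉ {0,…,n i}`). -/
noncomputable def resMat {ι : Type} [Fintype ι] (n : ι → ℕ) (q : ι → MvPolynomial (Fin 2) ℂ)
    (l : ℕ) : Matrix ((i : ι) × Fin (l + 1 - n i)) (Fin (l + 1)) ℂ :=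
  fun r c =>
    if r.2.val ≤ c.val ∧ c.val - r.2.val ≤ n r.1
      then coeffOf (q r.1) (n r.1 - (c.val - r.2.val)) (c.val - r.2.val) else 0

open MvPolynomial

namespace Stmt7aux
abbrev P2 := MvPolynomial (Fin 2) ℂ

lemma degree2 (u : Fin 2 →₀ ℕ) : u.degree = u 0 + u 1 := by
  rw [show u.degree = ∑ i ∈ u.support, u i from rfl]
  rw [Finset.sum_subset (Finset.subset_univ _)
    (by intro x _ hx; simpa using Finsupp.notMem_support_iff.mp hx)]
  simp [Fin.sum_univ_two]

lemma mem_supp_deg {p : P2} {nn : ℕ} (hp : p.IsHomogeneous nn) {u : Fin 2 →₀ ℕ}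
    (hu : u ∈ p.support) : u 0 + u 1 = nn := by
  by_contra hne
  exact (mem_support_iff.mp hu) (hp.coeff_eq_zero (by rw [degree2]; exact hne))

lemma Xmono (α β : ℕ) :
    (X 0 : P2) ^ α * X 1 ^ β
      = monomial (Finsupp.single 0 α + Finsupp.single 1 β) (1 : ℂ) := by
  rw [X_pow_eq_monomial, X_pow_eq_monomial, monomial_mul, one_mul]

/-- Cofactor of a homogeneous divisor of a homogeneous polynomial is homogeneous. -/
lemma cofactor_homog {p g h : P2} {N k : ℕ} (hp0 : p ≠ 0) (hpgh : p = g * h)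
    (hp : p.IsHomogeneous N) (hg : g.IsHomogeneous k) :
    k ≤ N ∧ h.IsHomogeneous (N - k) := by
  classical
  have hg0 : g ≠ 0 := by rintro rfl; rw [zero_mul] at hpgh; exact hp0 hpgh
  have hdec : p = ∑ j ∈ Finset.range (h.totalDegree + 1),
      (if N = k + j then g * homogeneousComponent j h else 0) := by
    calc p = homogeneousComponent N p := by
            rw [homogeneousComponent_of_mem ((mem_homogeneousSubmodule _ _).2 hp), if_pos rfl]
      _ = homogeneousComponent N (∑ j ∈ Finset.range (h.totalDegree + 1),
            g * homogeneousComponent j h) := by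
            rw [← Finset.mul_sum, sum_homogeneousComponent, ← hpgh]
      _ = _ := by
            rw [map_sum]
            refine Finset.sum_congr rfl fun j _ => ?_
            exact homogeneousComponent_of_mem ((mem_homogeneousSubmodule _ _).2
              (hg.mul (homogeneousComponent_isHomogeneous j h)))
  have hkN : k ≤ N := by
    by_contra hkN
    apply hp0
    rw [hdec]
    refine Finset.sum_eq_zero fun j _ => ?_
    rw [if_neg (by omega)]
  refine ⟨hkN, ?_⟩
  have hdec2 : p = if N - k ∈ Finset.range (h.totalDegree + 1)
      then g * homogeneousComponent (N - k) h else 0 := by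
    rw [hdec, ← Finset.sum_ite_eq (Finset.range (h.totalDegree + 1)) (N - k)
      (fun j => g * homogeneousComponent j h)]
    refine Finset.sum_congr rfl fun j _ => ?_
    congr 1
    simp only [eq_iff_iff]
    omega
  by_cases hmem : N - k ∈ Finset.range (h.totalDegree + 1)
  · rw [if_pos hmem] at hdec2
    have : h = homogeneousComponent (N - k) h := by
      apply mul_left_cancel₀ hg0
      rw [← hpgh, hdec2]
    rw [this]
    exact homogeneousComponent_isHomogeneous _ _
  · rw [if_neg hmem] at hdec2
    exact absurd hdec2 hp0


lemma aeval_pair {A : Type*} [CommRing A] [Algebra ℂ A] {p : P2} {nn : ℕ}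
    (hp : p.IsHomogeneous nn) (e : ℂ) (w : A) :
    MvPolynomial.aeval ![e • w, w] p
      = algebraMap ℂ A (MvPolynomial.eval ![e, 1] p) * w ^ nn := by
  conv_lhs => rw [p.as_sum]
  conv_rhs => rw [p.as_sum]
  rw [map_sum, map_sum, map_sum, Finset.sum_mul]
  refine Finset.sum_congr rfl fun u hu => ?_
  have hdeg : u 0 + u 1 = nn := mem_supp_deg hp hu
  rw [aeval_monomial, eval_monomial]
  rw [Finsupp.prod_fintype _ _ (fun i => pow_zero _),
      Finsupp.prod_fintype _ _ (fun i => pow_zero _),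
      Fin.prod_univ_two, Fin.prod_univ_two]
  simp only [Matrix.cons_val_zero, Matrix.cons_val_one, Matrix.head_cons, map_one, one_pow,
    mul_one, smul_pow, Algebra.smul_def, map_mul, map_pow]
  rw [← hdeg, pow_add]
  ring

lemma C_mul_dvd {c : ℂ} (hc : c ≠ 0) {u v : P2} (h : u ∣ v) : (C c * u) ∣ v := by
  obtain ⟨w, rfl⟩ := h
  exact ⟨C c⁻¹ * w, by
    rw [show C c * u * (C c⁻¹ * w) = (C c * C c⁻¹) * (u * w) by ring, ← C_mul,
      mul_inv_cancel₀ hc, C_1, one_mul]⟩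

lemma linear_dvd_aux {p : P2} {nn : ℕ} (hp : p.IsHomogeneous nn) {z : Fin 2 → ℂ}
    (hz1 : z 1 ≠ 0) (hz : MvPolynomial.aeval z p = 0) :
    (X 0 - (z 0 / z 1) • X 1 : P2) ∣ p := by
  set e : ℂ := z 0 / z 1 with he
  set B := MvPolynomial (Fin 1) ℂ
  set E := MvPolynomial.finSuccEquiv ℂ 1 with hE
  set a : B := e • X 0 with ha
  -- the evaluation `eval ![e,1] p` vanishes
  have heval : MvPolynomial.eval ![e, 1] p = 0 := by
    have h2 := aeval_pair (A := ℂ) hp e (z 1)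
    rw [show e • z 1 = z 0 by rw [he, smul_eq_mul, div_mul_cancel₀ _ hz1]] at h2
    rw [show (![z 0, z 1] : Fin 2 → ℂ) = z by
      funext i; fin_cases i <;> simp] at h2
    rw [hz] at h2
    have hzpow : z 1 ^ nn ≠ 0 := pow_ne_zero _ hz1
    have : MvPolynomial.eval ![e, 1] p * z 1 ^ nn = 0 := by
      simpa [Algebra.algebraMap_self] using h2.symm
    exact (mul_eq_zero.mp this).resolve_right hzpow
  -- `E p` has root `a`
  have hcomp : (((Polynomial.aeval a).restrictScalars ℂ).comp
      (E : MvPolynomial (Fin 2) ℂ →ₐ[ℂ] Polynomial B)) = MvPolynomial.aeval ![a, X 0] := by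
    refine MvPolynomial.algHom_ext fun i => ?_
    refine Fin.cases ?_ (fun j => ?_) i
    · simp only [AlgHom.coe_comp, AlgHom.coe_restrictScalars', Function.comp_apply,
        AlgHom.coe_coe, aeval_X]
      rw [hE, AlgEquiv.coe_toAlgHom, finSuccEquiv_X_zero]
      simp
    · have hj : j = 0 := Subsingleton.elim _ _
      simp only [AlgHom.coe_comp, AlgHom.coe_restrictScalars', Function.comp_apply,
        AlgHom.coe_coe, aeval_X]
      rw [hE, AlgEquiv.coe_toAlgHom, finSuccEquiv_X_succ, hj]
      simp [Polynomial.aeval_C, Algebra.algebraMap_self]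
      rfl
  have hroot : Polynomial.eval a (E p) = 0 := by
    have h3 := congrArg (fun Φ => Φ p) hcomp
    simp only [AlgHom.coe_comp, AlgHom.coe_restrictScalars', Function.comp_apply,
      AlgHom.coe_coe, AlgEquiv.coe_toAlgHom] at h3
    rw [← Polynomial.coe_aeval_eq_eval]
    rw [h3, aeval_pair hp e (X 0), heval, map_zero, zero_mul]
  have hdvd : (Polynomial.X - Polynomial.C a) ∣ E p := Polynomial.dvd_iff_isRoot.mpr hroot
  have hdvd2 := map_dvd E.symm hdvd
  rw [AlgEquiv.symm_apply_apply] at hdvd2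
  rw [map_sub] at hdvd2
  have hX : E.symm Polynomial.X = X 0 := by
    rw [AlgEquiv.symm_apply_eq, hE, finSuccEquiv_X_zero]
  have hCX : E.symm (Polynomial.C (X 0)) = X 1 := by
    rw [AlgEquiv.symm_apply_eq, hE, show (1 : Fin 2) = Fin.succ 0 from rfl, finSuccEquiv_X_succ]
  have hC : E.symm (Polynomial.C a) = e • X 1 := by
    rw [ha, ← Polynomial.smul_C, map_smul, hCX]
  rwa [hX, hC] at hdvd2


lemma fin2_eq (u : Fin 2 →₀ ℕ) :
    u = Finsupp.single 0 (u 0) + Finsupp.single 1 (u 1) := by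
  ext i; fin_cases i <;> simp

/-- Factor theorem for binary forms. -/
lemma linear_dvd {p : P2} {nn : ℕ} (hp : p.IsHomogeneous nn) {z : Fin 2 → ℂ}
    (hz0 : z ≠ 0) (hz : MvPolynomial.aeval z p = 0) :
    (z 1 • X 0 - z 0 • X 1 : P2) ∣ p := by
  by_cases hz1 : z 1 = 0
  · -- then z 0 ≠ 0 and the divisor is `(-z 0) • X 1`; show `X 1 ∣ p`
    have hz00 : z 0 ≠ 0 := by
      intro h0; apply hz0; funext i; fin_cases i <;> simp [h0, hz1]
    have hps : (rename (⇑(Equiv.swap (0 : Fin 2) 1)) p).IsHomogeneous nn :=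
      hp.rename_isHomogeneous
    have hzs : MvPolynomial.aeval ![z 1, z 0] (rename (⇑(Equiv.swap (0 : Fin 2) 1)) p) = 0 := by
      rw [aeval_rename]
      rw [show (![z 1, z 0] ∘ ⇑(Equiv.swap (0 : Fin 2) 1)) = z by
        funext i; fin_cases i <;> simp [Equiv.swap_apply_left, Equiv.swap_apply_right]]
      exact hz
    have h1 := linear_dvd_aux hps (z := ![z 1, z 0]) (by simpa using hz00) hzs
    rw [show (![z 1, z 0] : Fin 2 → ℂ) 0 / (![z 1, z 0] : Fin 2 → ℂ) 1 = 0 by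
      simp [hz1], zero_smul, sub_zero] at h1
    have h2 := map_dvd (rename (⇑(Equiv.swap (0 : Fin 2) 1))) h1
    rw [rename_rename, rename_X] at h2
    rw [show (⇑(Equiv.swap (0 : Fin 2) 1) ∘ ⇑(Equiv.swap (0 : Fin 2) 1)) = id by
      funext i; simp, rename_id] at h2
    rw [Equiv.swap_apply_left] at h2
    rw [hz1, zero_smul, zero_sub, ← neg_smul]
    have : ((-z 0) • X 1 : P2) = C (-z 0) * X 1 := smul_eq_C_mul _ _
    rw [this]
    exact C_mul_dvd (neg_ne_zero.mpr hz00) h2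
  · have h1 := linear_dvd_aux hp hz1 hz
    have : (z 1 • X 0 - z 0 • X 1 : P2) = C (z 1) * (X 0 - (z 0 / z 1) • X 1) := by
      rw [mul_sub, ← smul_eq_C_mul, smul_eq_C_mul (a := z 0 / z 1), ← mul_assoc, ← C_mul,
        mul_div_cancel₀ _ hz1, ← smul_eq_C_mul]
    rw [this]
    exact C_mul_dvd hz1 h1

/-- A nonzero binary form of positive degree has a nontrivial zero over ℂ. -/
lemma exists_zero {p : P2} {nn : ℕ} (hp : p.IsHomogeneous nn) (h1 : 1 ≤ nn) (hp0 : p ≠ 0) :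
    ∃ z : Fin 2 → ℂ, z ≠ 0 ∧ MvPolynomial.aeval z p = 0 := by
  by_cases hA : coeff (Finsupp.single 1 nn) p = 0
  · refine ⟨![0, 1], by
      intro h; have := congrFun h 1; simp at this, ?_⟩
    rw [p.as_sum, map_sum]
    refine Finset.sum_eq_zero fun u hu => ?_
    rw [aeval_monomial, Finsupp.prod_fintype _ _ (fun i => pow_zero _), Fin.prod_univ_two]
    simp only [Matrix.cons_val_zero, Matrix.cons_val_one, Matrix.head_cons, one_pow, mul_one]
    by_cases h0 : u 0 = 0
    · have hu1 : u 1 = nn := by have := mem_supp_deg hp hu; omega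
      have : u = Finsupp.single 1 nn := by rw [fin2_eq u, h0, hu1]; simp
      rw [this] at hu ⊢
      simp [hA]
    · rw [zero_pow h0, mul_zero]
  · -- the dehomogenization has positive degree, hence a root
    set u : Polynomial ℂ := MvPolynomial.aeval ![1, Polynomial.X] p with hu
    have hcoeff : u.coeff nn = coeff (Finsupp.single 1 nn) p := by
      conv_lhs => rw [hu, p.as_sum, map_sum, Polynomial.finset_sum_coeff]
      have : ∀ v ∈ p.support,
          (MvPolynomial.aeval ![1, Polynomial.X] (monomial v (coeff v p))).coeff nn
            = if v = Finsupp.single 1 nn then coeff v p else 0 := by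
        intro v hv
        rw [aeval_monomial, Finsupp.prod_fintype _ _ (fun i => pow_zero _), Fin.prod_univ_two]
        simp only [Matrix.cons_val_zero, Matrix.cons_val_one, Matrix.head_cons, one_pow, one_mul]
        rw [show (algebraMap ℂ (Polynomial ℂ)) (coeff v p) = Polynomial.C (coeff v p) from rfl,
          Polynomial.coeff_C_mul, Polynomial.coeff_X_pow]
        have hvd := mem_supp_deg hp hv
        by_cases hv1 : v 1 = nn
        · have hv0 : v 0 = 0 := by omega
          rw [if_pos hv1.symm, if_pos (by rw [fin2_eq v, hv0, hv1]; simp), mul_one]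
        · rw [if_neg (show ¬ (nn = v 1) from fun hh => hv1 hh.symm),
            if_neg (show ¬ (v = Finsupp.single 1 nn) from fun hvs => hv1 (by rw [hvs]; simp)),
            mul_zero]
      rw [Finset.sum_congr rfl this, Finset.sum_ite_eq' p.support (Finsupp.single 1 nn)
        (fun v => coeff v p)]
      by_cases hmem : Finsupp.single 1 nn ∈ p.support
      · rw [if_pos hmem]
      · rw [if_neg hmem]
        exact (notMem_support_iff.mp hmem).symm
    have hdeg : 0 < u.degree := by
      have : (nn : WithBot ℕ) ≤ u.degree :=
        Polynomial.le_degree_of_ne_zero (by rw [hcoeff]; exact hA)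
      calc (0 : WithBot ℕ) < (nn : WithBot ℕ) := by exact_mod_cast h1
        _ ≤ u.degree := this
    obtain ⟨r, hr⟩ := Complex.exists_root hdeg
    refine ⟨![1, r], by
      intro h; have := congrFun h 0; simp at this, ?_⟩
    have hcomp : ((Polynomial.aeval r).comp (MvPolynomial.aeval ![1, Polynomial.X]))
        = MvPolynomial.aeval (R := ℂ) ![1, r] := by
      rw [MvPolynomial.comp_aeval]
      congr 1
      funext i
      fin_cases i <;> simp
    have := congrArg (fun Φ => Φ p) hcomp
    simp only [AlgHom.coe_comp, Function.comp_apply] at this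
    rw [← this, ← hu]
    rw [show (Polynomial.aeval r) u = Polynomial.eval r u from by
      rw [← Polynomial.coe_aeval_eq_eval]]
    exact hr


lemma exists_linear_factor {f : P2} {a : ℕ} (hf0 : f ≠ 0) (hf : f.IsHomogeneous (a + 1)) :
    ∃ (c d : ℂ) (g : P2), ¬(c = 0 ∧ d = 0) ∧ g ≠ 0 ∧ g.IsHomogeneous a ∧
      f = (c • X 0 + d • X 1) * g := by
  obtain ⟨z, hz0, hz⟩ := exists_zero hf (by omega) hf0
  obtain ⟨g, hg⟩ := linear_dvd hf hz0 hz
  have hL : ((z 1 • X 0 - z 0 • X 1 : P2)).IsHomogeneous 1 := by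
    have h1 : (z 1 • X 0 : P2).IsHomogeneous 1 := by
      rw [smul_eq_C_mul]; exact isHomogeneous_C_mul_X _ _
    have h2 : (z 0 • X 1 : P2).IsHomogeneous 1 := by
      rw [smul_eq_C_mul]; exact isHomogeneous_C_mul_X _ _
    exact h1.sub h2
  obtain ⟨hk, hgh⟩ := cofactor_homog hf0 hg hf hL
  refine ⟨z 1, -z 0, g, ?_, ?_, by simpa using hgh, ?_⟩
  · rintro ⟨h1, h0⟩
    apply hz0
    funext i
    fin_cases i <;> simp [h1, show z 0 = 0 from by
      have := neg_eq_zero.mp h0; exact this]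
  · intro h; apply hf0; rw [hg, h, mul_zero]
  · rw [hg]
    congr 1
    rw [sub_eq_add_neg, neg_smul]

lemma homog_mem_span {p : P2} {k : ℕ} (hp : p.IsHomogeneous k) :
    p ∈ Submodule.span ℂ (Set.range (fun c : Fin (k+1) =>
      (monomial (Finsupp.single 0 (k - (c : ℕ)) + Finsupp.single 1 (c : ℕ)) 1 : P2))) := by
  have hrw := p.as_sum
  rw [hrw]
  refine Submodule.sum_mem _ fun u hu => ?_
  have hd := mem_supp_deg hp hu
  have : (monomial u (coeff u p) : P2) = coeff u p • monomial u 1 := by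
    rw [smul_monomial, smul_eq_mul, mul_one]
  rw [this]
  refine Submodule.smul_mem _ _ (Submodule.subset_span ⟨⟨u 1, by omega⟩, ?_⟩)
  have hu0 : k - u 1 = u 0 := by omega
  show monomial (Finsupp.single 0 (k - u 1) + Finsupp.single 1 (u 1)) 1 = monomial u 1
  rw [hu0, ← fin2_eq u]

noncomputable def JL (P : Finset P2) (L : ℕ) : Submodule ℂ P2 :=
  Submodule.span ℂ {x : P2 | ∃ p ∈ P, ∃ α β : ℕ,
    α + β + p.totalDegree = L ∧ x = X 0 ^ α * X 1 ^ β * p}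

lemma JL_fd (P : Finset P2) (L : ℕ) : FiniteDimensional ℂ (JL P L) := by
  apply FiniteDimensional.span_of_finite
  have hsub : {x : P2 | ∃ p ∈ P, ∃ α β : ℕ,
      α + β + p.totalDegree = L ∧ x = X 0 ^ α * X 1 ^ β * p}
      ⊆ (fun y : P2 × ℕ × ℕ => X 0 ^ y.2.1 * X 1 ^ y.2.2 * y.1) ''
        ((P : Set P2) ×ˢ (Set.Iic L ×ˢ Set.Iic L)) := by
    rintro x ⟨p, hp, α, β, hd, rfl⟩
    exact ⟨(p, α, β), ⟨hp, by simp; omega, by simp; omega⟩, rfl⟩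
  exact Set.Finite.subset (Set.Finite.image _
    ((P.finite_toSet).prod ((Set.finite_Iic L).prod (Set.finite_Iic L)))) hsub

lemma indep_block {f : P2} (hf0 : f ≠ 0) (M : ℕ) :
    Module.finrank ℂ (Submodule.span ℂ (Set.range (fun c : Fin (M+1) =>
      (X 0 : P2) ^ (c : ℕ) * X 1 ^ (M - (c : ℕ)) * f))) = M + 1 := by
  have h1 : LinearIndependent ℂ (fun c : Fin (M+1) =>
      (monomial (Finsupp.single 0 (c : ℕ) + Finsupp.single 1 (M - (c : ℕ))) 1 : P2)) := by
    have hb := (MvPolynomial.basisMonomials (Fin 2) ℂ).linearIndependent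
    have hinj : Function.Injective (fun c : Fin (M+1) =>
        Finsupp.single (0 : Fin 2) (c : ℕ) + Finsupp.single 1 (M - (c : ℕ))) := by
      intro c c' h
      simp only [] at h
      have h0 := DFunLike.congr_fun h (0 : Fin 2)
      simp [Finsupp.add_apply, Finsupp.single_apply] at h0
      exact Fin.val_injective h0
    have := hb.comp (fun c : Fin (M+1) =>
      Finsupp.single (0 : Fin 2) (c : ℕ) + Finsupp.single 1 (M - (c : ℕ))) hinj
    simpa only [coe_basisMonomials, Function.comp_def] using this
  have hmul := h1.map' (LinearMap.mulLeft ℂ f)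
    (LinearMap.ker_eq_bot.mpr (mul_right_injective₀ hf0))
  have heq : ((LinearMap.mulLeft ℂ f) ∘ fun c : Fin (M+1) =>
      (monomial (Finsupp.single 0 (c : ℕ) + Finsupp.single 1 (M - (c : ℕ))) 1 : P2))
      = fun c : Fin (M+1) => (X 0 : P2) ^ (c : ℕ) * X 1 ^ (M - (c : ℕ)) * f := by
    funext c
    simp only [Function.comp_apply, LinearMap.mulLeft_apply]
    rw [Xmono, mul_comm]
  rw [heq] at hmul
  rw [finrank_span_eq_card hmul, Fintype.card_fin]

lemma block_le_JL {P : Finset P2} {L : ℕ} {f : P2} (hfP : f ∈ P) (hf0 : f ≠ 0) {a : ℕ}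
    (hfh : f.IsHomogeneous a) (haL : a ≤ L) :
    Submodule.span ℂ (Set.range (fun c : Fin (L - a + 1) =>
      (X 0 : P2) ^ (c : ℕ) * X 1 ^ (L - a - (c : ℕ)) * f)) ≤ JL P L := by
  rw [Submodule.span_le]
  rintro x ⟨c, rfl⟩
  apply Submodule.subset_span
  refine ⟨f, hfP, (c : ℕ), L - a - (c : ℕ), ?_, rfl⟩
  rw [hfh.totalDegree hf0]
  have := c.isLt
  omega

lemma JL_lower {P : Finset P2} {L : ℕ} {f : P2} (hfP : f ∈ P) (hf0 : f ≠ 0) {a : ℕ}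
    (hfh : f.IsHomogeneous a) (haL : a ≤ L) :
    L - a + 1 ≤ Module.finrank ℂ (JL P L) := by
  haveI := JL_fd P L
  calc L - a + 1 = Module.finrank ℂ (Submodule.span ℂ (Set.range (fun c : Fin (L - a + 1) =>
        (X 0 : P2) ^ (c : ℕ) * X 1 ^ (L - a - (c : ℕ)) * f))) := (indep_block hf0 (L - a)).symm
    _ ≤ Module.finrank ℂ (JL P L) := Submodule.finrank_mono (block_le_JL hfP hf0 hfh haL)


lemma lemH_base {P : Finset P2} {a b L : ℕ}
    (hf : ∃ f ∈ P, f ≠ 0 ∧ f.IsHomogeneous a)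
    (hc : L < b ∨ a = 0) :
    L + 1 ≤ Module.finrank ℂ (JL P L) + (a + b - 1 - L) := by
  obtain ⟨f, hfP, hf0, hfh⟩ := hf
  by_cases haL : a ≤ L
  · have hlow := JL_lower hfP hf0 hfh haL
    omega
  · have : a = 0 → False := fun h => haL (by omega)
    rcases hc with hc | hc
    · omega
    · exact absurd hc this

lemma lemH (a : ℕ) : ∀ (P : Finset P2) (b L : ℕ),
    (∀ p ∈ P, p ≠ 0 ∧ p.IsHomogeneous p.totalDegree ∧ p.totalDegree ≤ b) →
    (∃ f ∈ P, f ≠ 0 ∧ f.IsHomogeneous a) →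
    (∀ ℓ : P2, ℓ.IsHomogeneous 1 → ℓ ≠ 0 → ¬ ∀ p ∈ P, ℓ ∣ p) →
    L + 1 ≤ Module.finrank ℂ (JL P L) + (a + b - 1 - L) := by
  induction a with
  | zero =>
    intro P b L hP hf hcd
    exact lemH_base hf (Or.inr rfl)
  | succ a' ih =>
    intro P b L hP hf hcd
    by_cases hbL : b ≤ L
    case neg => exact lemH_base hf (Or.inl (by omega))
    obtain ⟨f, hfP, hf0, hfh⟩ := hf
    have hfb : a' + 1 ≤ b := by
      have h := (hP f hfP).2.2
      rwa [hfh.totalDegree hf0] at h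
    obtain ⟨c, d, g, hcd0, hg0, hgh, hfg⟩ := exists_linear_factor hf0 hfh
    set ℓ : P2 := c • X 0 + d • X 1 with hℓ
    have hℓh : ℓ.IsHomogeneous 1 := by
      rw [hℓ, smul_eq_C_mul, smul_eq_C_mul]
      exact (isHomogeneous_C_mul_X c 0).add (isHomogeneous_C_mul_X d 1)
    have hℓ0 : ℓ ≠ 0 := by
      intro h; apply hf0; rw [hfg, h, zero_mul]
    obtain ⟨pi, hpiP, hpidvd⟩ : ∃ p ∈ P, ¬ ℓ ∣ p := by
      have h := hcd ℓ hℓh hℓ0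
      push_neg at h
      exact h
    obtain ⟨hpi0, hpih, hpib⟩ := hP pi hpiP
    set z : Fin 2 → ℂ := ![d, -c] with hz
    have hz0 : z ≠ 0 := by
      intro h
      apply hcd0
      constructor
      · have := congrFun h 1
        simpa [hz] using this
      · have := congrFun h 0
        simpa [hz] using this
    have hzℓ : MvPolynomial.aeval z ℓ = 0 := by
      rw [hℓ, map_add, map_smul, map_smul, aeval_X, aeval_X]
      rw [hz]
      simp only [Matrix.cons_val_zero, Matrix.cons_val_one, Matrix.head_cons, smul_eq_mul]
      ring
    have hzpi : MvPolynomial.aeval z pi ≠ 0 := by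
      intro h0
      have hdv := linear_dvd hpih hz0 h0
      rw [show (z 1 • X 0 - z 0 • X 1 : P2) = -ℓ by
        rw [hz, hℓ]
        simp only [Matrix.cons_val_zero, Matrix.cons_val_one, Matrix.head_cons]
        module] at hdv
      exact hpidvd ((neg_dvd).mp hdv)
    obtain ⟨α, β, hαβ, hvnz⟩ : ∃ α β : ℕ, α + β + pi.totalDegree = L ∧
        MvPolynomial.aeval z ((X 0 : P2) ^ α * X 1 ^ β * pi) ≠ 0 := by
      by_cases hd0 : d = 0
      · have hc0 : c ≠ 0 := fun h => hcd0 ⟨h, hd0⟩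
        refine ⟨0, L - pi.totalDegree, by omega, ?_⟩
        rw [map_mul, map_mul, map_pow, map_pow, aeval_X, aeval_X]
        rw [hz]
        simp only [Matrix.cons_val_zero, Matrix.cons_val_one, Matrix.head_cons, pow_zero, one_mul]
        exact mul_ne_zero (pow_ne_zero _ (neg_ne_zero.mpr hc0)) hzpi
      · refine ⟨L - pi.totalDegree, 0, by omega, ?_⟩
        rw [map_mul, map_mul, map_pow, map_pow, aeval_X, aeval_X]
        rw [hz]
        simp only [Matrix.cons_val_zero, Matrix.cons_val_one, Matrix.head_cons, pow_zero, mul_one]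
        exact mul_ne_zero (pow_ne_zero _ hd0) hzpi
    set v : P2 := X 0 ^ α * X 1 ^ β * pi with hv
    have hvJL : v ∈ JL P L := Submodule.subset_span ⟨pi, hpiP, α, β, hαβ, rfl⟩
    set P' := insert g P with hP'
    have hP'h : ∀ p ∈ P', p ≠ 0 ∧ p.IsHomogeneous p.totalDegree ∧ p.totalDegree ≤ b := by
      intro p hp
      rcases Finset.mem_insert.mp hp with rfl | hp
      · have hgt : p.totalDegree = a' := hgh.totalDegree hg0
        exact ⟨hg0, by rw [hgt]; exact hgh, by omega⟩
      · exact hP p hp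
    have hf' : ∃ p ∈ P', p ≠ 0 ∧ p.IsHomogeneous a' :=
      ⟨g, Finset.mem_insert_self _ _, hg0, hgh⟩
    have hcd' : ∀ ℓ' : P2, ℓ'.IsHomogeneous 1 → ℓ' ≠ 0 → ¬ ∀ p ∈ P', ℓ' ∣ p := by
      intro ℓ' h1 h2 hall
      exact hcd ℓ' h1 h2 (fun p hp => hall p (Finset.mem_insert_of_mem hp))
    have hIH := ih P' b (L - 1) hP'h hf' hcd'
    set A := Submodule.map (LinearMap.mulLeft ℂ ℓ) (JL P' (L - 1)) with hA
    have hAJL : A ≤ JL P L := by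
      rw [hA, JL, Submodule.map_span, Submodule.span_le]
      rintro x ⟨y, ⟨p, hp, α', β', hd', rfl⟩, rfl⟩
      rcases Finset.mem_insert.mp hp with rfl | hpP
      · have hident : (LinearMap.mulLeft ℂ ℓ) (X 0 ^ α' * X 1 ^ β' * p)
            = X 0 ^ α' * X 1 ^ β' * f := by
          rw [LinearMap.mulLeft_apply, hfg]
          ring
        rw [hident]
        apply Submodule.subset_span
        refine ⟨f, hfP, α', β', ?_, rfl⟩
        have h1 : f.totalDegree = a' + 1 := hfh.totalDegree hf0
        have h2 : p.totalDegree = a' := hgh.totalDegree hg0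
        omega
      · have hident : (LinearMap.mulLeft ℂ ℓ) (X 0 ^ α' * X 1 ^ β' * p)
            = c • (X 0 ^ (α' + 1) * X 1 ^ β' * p) + d • (X 0 ^ α' * X 1 ^ (β' + 1) * p) := by
          rw [LinearMap.mulLeft_apply, hℓ, smul_eq_C_mul, smul_eq_C_mul, smul_eq_C_mul,
            smul_eq_C_mul]
          ring
        rw [hident]
        exact Submodule.add_mem _
          (Submodule.smul_mem _ _ (Submodule.subset_span ⟨p, hpP, α' + 1, β', by omega, rfl⟩))
          (Submodule.smul_mem _ _ (Submodule.subset_span ⟨p, hpP, α', β' + 1, by omega, rfl⟩))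
    have hvA : v ∉ A := by
      rintro ⟨y, _, hyv⟩
      apply hvnz
      show MvPolynomial.aeval z v = 0
      rw [← hyv, LinearMap.mulLeft_apply, map_mul, hzℓ, zero_mul]
    haveI hJ' := JL_fd P' (L - 1)
    haveI hAfd : FiniteDimensional ℂ A := Module.Finite.map _ _
    have hrA : Module.finrank ℂ A = Module.finrank ℂ (JL P' (L - 1)) := by
      symm
      exact LinearEquiv.finrank_eq
        (Submodule.equivMapOfInjective _ (mul_right_injective₀ hℓ0) _)
    haveI : FiniteDimensional ℂ (A ⊔ Submodule.span ℂ {v} : Submodule ℂ P2) := inferInstance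
    have hlt : A < A ⊔ Submodule.span ℂ {v} := by
      refine lt_of_le_of_ne le_sup_left (fun h => hvA ?_)
      have hmem : v ∈ A ⊔ Submodule.span ℂ {v} :=
        (le_sup_right : Submodule.span ℂ {v} ≤ A ⊔ Submodule.span ℂ {v})
          (Submodule.mem_span_singleton_self v)
      rwa [← h] at hmem
    have hrank := Submodule.finrank_lt_finrank_of_lt hlt
    have hsup_le : A ⊔ Submodule.span ℂ {v} ≤ JL P L :=
      sup_le hAJL ((Submodule.span_singleton_le_iff_mem v _).mpr hvJL)
    haveI := JL_fd P L
    have hmono := Submodule.finrank_mono hsup_le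
    omega


noncomputable def ind (l : ℕ) (c : Fin (l + 1)) : Fin 2 →₀ ℕ :=
  Finsupp.single 0 (l - (c : ℕ)) + Finsupp.single 1 (c : ℕ)

noncomputable def phi (l : ℕ) : (Fin (l + 1) → ℂ) →ₗ[ℂ] P2 :=
  ∑ c : Fin (l + 1), (LinearMap.proj c).smulRight (monomial (ind l c) 1)

lemma phi_apply (l : ℕ) (v : Fin (l + 1) → ℂ) :
    phi l v = ∑ c : Fin (l + 1), v c • monomial (ind l c) 1 := by
  rw [phi, LinearMap.sum_apply]
  refine Finset.sum_congr rfl fun c _ => ?_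
  rw [LinearMap.smulRight_apply, LinearMap.proj_apply]

lemma ind_inj {l : ℕ} {c c' : Fin (l + 1)} (h : ind l c' = ind l c) : c' = c := by
  have h1 := DFunLike.congr_fun h (1 : Fin 2)
  simp [ind, Finsupp.add_apply, Finsupp.single_apply] at h1
  exact Fin.val_injective h1

lemma coeff_phi (l : ℕ) (v : Fin (l + 1) → ℂ) (c : Fin (l + 1)) :
    coeff (ind l c) (phi l v) = v c := by
  rw [phi_apply]
  rw [show coeff (ind l c) (∑ c' : Fin (l + 1), v c' • monomial (ind l c') (1:ℂ))
      = ∑ c' : Fin (l + 1), coeff (ind l c) (v c' • monomial (ind l c') (1:ℂ)) from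
    map_sum (MvPolynomial.coeffAddMonoidHom (R := ℂ) (ind l c)) _ _]
  have hterm : ∀ c' : Fin (l + 1), coeff (ind l c) (v c' • monomial (ind l c') (1:ℂ))
      = if c' = c then v c' else 0 := by
    intro c'
    rw [coeff_smul, coeff_monomial]
    by_cases h : c' = c
    · rw [if_pos h, if_pos (by rw [h]), smul_eq_mul, mul_one]
    · rw [if_neg h, if_neg (fun hh => h (ind_inj hh)), smul_eq_mul, mul_zero]
  rw [Finset.sum_congr rfl (fun c' _ => hterm c'),
    Finset.sum_ite_eq' Finset.univ c (fun c' => v c'), if_pos (Finset.mem_univ c)]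

lemma ind_sum (l : ℕ) (c : Fin (l + 1)) : (ind l c) 0 + (ind l c) 1 = l := by
  have := c.isLt
  simp [ind, Finsupp.add_apply, Finsupp.single_apply]
  omega

lemma coeff_phi_ne (l : ℕ) (v : Fin (l + 1) → ℂ) {u : Fin 2 →₀ ℕ} (hu : u 0 + u 1 ≠ l) :
    coeff u (phi l v) = 0 := by
  rw [phi_apply]
  rw [show coeff u (∑ c' : Fin (l + 1), v c' • monomial (ind l c') (1:ℂ))
      = ∑ c' : Fin (l + 1), coeff u (v c' • monomial (ind l c') (1:ℂ)) from
    map_sum (MvPolynomial.coeffAddMonoidHom (R := ℂ) u) _ _]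
  refine Finset.sum_eq_zero fun c' _ => ?_
  rw [coeff_smul, coeff_monomial, if_neg (fun hh => hu (by rw [← hh]; exact ind_sum l c')),
    smul_eq_mul, mul_zero]

lemma phi_inj (l : ℕ) : Function.Injective (phi l) := by
  rw [← LinearMap.ker_eq_bot]
  rw [Submodule.eq_bot_iff]
  intro v hv
  funext c
  have := coeff_phi l v c
  rw [LinearMap.mem_ker.mp hv] at this
  simpa using this.symm

set_option maxHeartbeats 1000000 in
lemma phi_row {s : ℕ} (n : Fin s → ℕ) (q : Fin s → P2) (l : ℕ)
    (hqh : ∀ i, (q i).IsHomogeneous (n i)) (hnl : ∀ i, n i ≤ l)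
    (r : (i : Fin s) × Fin (l + 1 - n i)) :
    phi l (resMat n q l r) = X 0 ^ (l - n r.1 - (r.2 : ℕ)) * X 1 ^ (r.2 : ℕ) * q r.1 := by
  obtain ⟨i, t⟩ := r
  have htle : (t : ℕ) ≤ l - n i := by have := t.isLt; omega
  have hnil := hnl i
  apply MvPolynomial.ext
  intro u
  rw [Xmono, mul_comm, coeff_mul_monomial']
  set sfin : Fin 2 →₀ ℕ :=
    Finsupp.single 0 (l - n i - (t : ℕ)) + Finsupp.single 1 (t : ℕ) with hsdef
  have hs0 : sfin 0 = l - n i - (t : ℕ) := by simp [hsdef]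
  have hs1 : sfin 1 = (t : ℕ) := by simp [hsdef]
  by_cases hul : u 0 + u 1 = l
  · have hu1lt : u 1 < l + 1 := by omega
    have hu : u = ind l ⟨u 1, hu1lt⟩ := by
      rw [ind]
      have h00 : u 0 = l - u 1 := by omega
      conv_lhs => rw [fin2_eq u, h00]
    have hind0 : (ind l (⟨u 1, hu1lt⟩ : Fin (l + 1))) 0 = l - u 1 := by
      simp [ind, Finsupp.add_apply, Finsupp.single_apply]
    have hind1 : (ind l (⟨u 1, hu1lt⟩ : Fin (l + 1))) 1 = u 1 := by
      simp [ind, Finsupp.add_apply, Finsupp.single_apply]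
    rw [hu, coeff_phi]
    show (if (t : ℕ) ≤ u 1 ∧ u 1 - (t : ℕ) ≤ n i then
        coeffOf (q i) (n i - (u 1 - (t : ℕ))) (u 1 - (t : ℕ)) else 0) = _
    by_cases hcond : (t : ℕ) ≤ u 1 ∧ u 1 - (t : ℕ) ≤ n i
    · rw [if_pos hcond]
      have hle : sfin ≤ ind l ⟨u 1, hu1lt⟩ := by
        rw [Finsupp.le_def]
        intro j
        fin_cases j
        · simp only [Fin.zero_eta, Fin.isValue, hs0, hind0]
          omega
        · simp only [Fin.mk_one, Fin.isValue, hs1, hind1]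
          exact hcond.1
      rw [if_pos hle, mul_one, coeffOf]
      congr 1
      ext j
      fin_cases j
      · simp only [Fin.zero_eta, Fin.isValue, Finsupp.tsub_apply, hind0, hs0,
          Finsupp.add_apply, Finsupp.single_apply]
        simp
        omega
      · simp only [Fin.mk_one, Fin.isValue, Finsupp.tsub_apply, hind1, hs1,
          Finsupp.add_apply, Finsupp.single_apply]
        simp
    · rw [if_neg hcond]
      rw [if_neg (fun hle => hcond ?_)]
      have h1 := Finsupp.le_def.mp hle 1
      have h0 := Finsupp.le_def.mp hle 0
      rw [hs1, hind1] at h1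
      rw [hs0, hind0] at h0
      exact ⟨h1, by omega⟩
  · rw [coeff_phi_ne l _ hul]
    by_cases hle : sfin ≤ u
    · rw [if_pos hle, mul_one]
      symm
      apply (hqh i).coeff_eq_zero
      rw [degree2]
      have h0 := Finsupp.le_def.mp hle 0
      have h1 := Finsupp.le_def.mp hle 1
      rw [hs0] at h0
      rw [hs1] at h1
      rw [Finsupp.tsub_apply, Finsupp.tsub_apply, hs0, hs1]
      omega
    · rw [if_neg hle]


lemma rank_eq {s : ℕ} (n : Fin s → ℕ) (q : Fin s → P2) (l : ℕ)
    (hqh : ∀ i, (q i).IsHomogeneous (n i)) (hnl : ∀ i, n i ≤ l) :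
    (resMat n q l).rank = Module.finrank ℂ (Submodule.span ℂ
      {x : P2 | ∃ i, ∃ α β : ℕ, α + β + n i = l ∧ x = X 0 ^ α * X 1 ^ β * q i}) := by
  rw [Matrix.rank_eq_finrank_span_row]
  rw [LinearEquiv.finrank_eq (Submodule.equivMapOfInjective (phi l) (phi_inj l)
    (Submodule.span ℂ (Set.range (resMat n q l).row)))]
  have hset : Submodule.map (phi l) (Submodule.span ℂ (Set.range (resMat n q l).row))
      = Submodule.span ℂ
        {x : P2 | ∃ i, ∃ α β : ℕ, α + β + n i = l ∧ x = X 0 ^ α * X 1 ^ β * q i} := by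
    rw [Submodule.map_span, ← Set.range_comp]
    refine congrArg (Submodule.span ℂ) ?_
    ext x
    constructor
    · rintro ⟨r, rfl⟩
      rw [Function.comp_apply, Matrix.row_apply', phi_row n q l hqh hnl r]
      refine ⟨r.1, l - n r.1 - (r.2 : ℕ), (r.2 : ℕ), ?_, rfl⟩
      have := r.2.isLt
      have := hnl r.1
      omega
    · rintro ⟨i, α, β, hd, rfl⟩
      have hβ : β < l + 1 - n i := by have := hnl i; omega
      refine ⟨⟨i, ⟨β, hβ⟩⟩, ?_⟩
      rw [Function.comp_apply, Matrix.row_apply', phi_row n q l hqh hnl ⟨i, ⟨β, hβ⟩⟩]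
      have hval : ((⟨β, hβ⟩ : Fin (l + 1 - n i)) : ℕ) = β := rfl
      rw [hval, show l - n i - β = α from by omega]
  rw [hset]

lemma easy_dir {s : ℕ} (n : Fin s → ℕ) (q : Fin s → P2) (hq0 : ∀ i, q i ≠ 0)
    (hqh : ∀ i, (q i).IsHomogeneous (n i)) (l e : ℕ) (D : P2) (hD : D.IsHomogeneous e)
    (hdvd : ∀ i, D ∣ q i) (hnl : ∀ i, n i ≤ l) (hel : e ≤ l) :
    Module.finrank ℂ (Submodule.span ℂ
      {x : P2 | ∃ i, ∃ α β : ℕ, α + β + n i = l ∧ x = X 0 ^ α * X 1 ^ β * q i})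
      ≤ l - e + 1 := by
  classical
  set mono : Fin (l - e + 1) → P2 := fun c =>
    monomial (Finsupp.single 0 (l - e - (c : ℕ)) + Finsupp.single 1 (c : ℕ)) 1 with hmono
  set U := Submodule.map (LinearMap.mulLeft ℂ D) (Submodule.span ℂ (Set.range mono)) with hU
  haveI hfd1 : FiniteDimensional ℂ (Submodule.span ℂ (Set.range mono)) :=
    FiniteDimensional.span_of_finite _ (Set.finite_range mono)
  haveI hfd2 : FiniteDimensional ℂ U := Module.Finite.map _ _
  have hVU : Submodule.span ℂ
      {x : P2 | ∃ i, ∃ α β : ℕ, α + β + n i = l ∧ x = X 0 ^ α * X 1 ^ β * q i} ≤ U := by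
    rw [Submodule.span_le]
    rintro x ⟨i, α, β, hd, rfl⟩
    obtain ⟨h, hh⟩ := hdvd i
    obtain ⟨hke, hhh⟩ := cofactor_homog (hq0 i) hh (hqh i) hD
    have hhom : ((X 0 : P2) ^ α * X 1 ^ β * h).IsHomogeneous (l - e) := by
      have h2 := ((isHomogeneous_X_pow (0 : Fin 2) α).mul
        (isHomogeneous_X_pow (1 : Fin 2) β)).mul hhh
      have : α + β + (n i - e) = l - e := by omega
      rwa [this] at h2
    have hmem : (X 0 : P2) ^ α * X 1 ^ β * h ∈ Submodule.span ℂ (Set.range mono) :=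
      homog_mem_span hhom
    exact ⟨_, hmem, by rw [LinearMap.mulLeft_apply, hh]; ring⟩
  calc Module.finrank ℂ (Submodule.span ℂ
      {x : P2 | ∃ i, ∃ α β : ℕ, α + β + n i = l ∧ x = X 0 ^ α * X 1 ^ β * q i})
      ≤ Module.finrank ℂ U := Submodule.finrank_mono hVU
    _ ≤ Module.finrank ℂ (Submodule.span ℂ (Set.range mono)) := Submodule.finrank_map_le _ _
    _ ≤ (Set.range mono).toFinset.card := finrank_span_le_card _
    _ ≤ l - e + 1 := by
        rw [Set.toFinset_range]
        calc (Finset.image mono Finset.univ).card ≤ Finset.univ.card := Finset.card_image_le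
          _ = l - e + 1 := by simp


end Stmt7aux

open Stmt7aux

theorem stmt_7 (s : ℕ) (hs : 1 ≤ s) (n : Fin s → ℕ) (hn : ∀ i, 1 ≤ n i)
    (q : Fin s → MvPolynomial (Fin 2) ℂ) (hq0 : ∀ i, q i ≠ 0)
    (hqh : ∀ i, (q i).IsHomogeneous (n i))
    (nmin nmax m : ℕ)
    (hmin1 : ∀ i, nmin ≤ n i) (hmin2 : ∃ i, n i = nmin)
    (hmax1 : ∀ i, n i ≤ nmax) (hmax2 : ∃ i, n i = nmax)
    (hm1 : 1 ≤ m) (hm2 : m ≤ nmin) :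
    (∃ (D : MvPolynomial (Fin 2) ℂ) (e : ℕ), m ≤ e ∧ D.IsHomogeneous e ∧ ∀ i, D ∣ q i) ↔
    Matrix.rank (resMat n q (nmax + nmin - m)) < nmin + nmax - 2 * m + 2 := by
  classical
  obtain ⟨imin, himin⟩ := hmin2
  obtain ⟨imax, himax⟩ := hmax2
  have hminmax : nmin ≤ nmax := himin ▸ hmax1 imin
  set l := nmax + nmin - m with hl
  have hnl : ∀ i, n i ≤ l := fun i => by
    have := hmax1 i; have := hmin1 i; omega
  have hrk := rank_eq n q l hqh hnl
  constructor
  · rintro ⟨D, e, hme, hDh, hdvd⟩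
    have he_le : e ≤ nmin := by
      obtain ⟨h, hh⟩ := hdvd imin
      have := (cofactor_homog (hq0 imin) hh (hqh imin) hDh).1
      omega
    have hVle := easy_dir n q hq0 hqh l e D hDh hdvd hnl (by omega)
    rw [hrk]
    omega
  · intro hrank
    by_contra hno
    set Pr : ℕ → Prop := fun e => ∃ G : P2, G.IsHomogeneous e ∧ ∀ i, G ∣ q i with hPr
    have h0 : Pr 0 := ⟨1, isHomogeneous_one _ _, fun i => one_dvd _⟩
    set dd := Nat.findGreatest Pr (m - 1) with hdd
    have hdle : dd ≤ m - 1 := Nat.findGreatest_le _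
    obtain ⟨G, hGh, hGdvd⟩ : Pr dd := Nat.findGreatest_spec (Nat.zero_le _) h0
    have hGmax : ∀ e', dd < e' → ¬ Pr e' := by
      intro e' hlt hP'
      by_cases he' : e' ≤ m - 1
      · exact absurd hP' (Nat.findGreatest_is_greatest hlt he')
      · obtain ⟨G', hG'h, hG'dvd⟩ := hP'
        exact hno ⟨G', e', by omega, hG'h, hG'dvd⟩
    have hcof : ∀ i, ∃ p : P2, q i = G * p ∧ p ≠ 0 ∧ p.IsHomogeneous (n i - dd) ∧ dd ≤ n i := by
      intro i
      obtain ⟨p, hp⟩ := hGdvd i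
      obtain ⟨h1, h2⟩ := cofactor_homog (hq0 i) hp (hqh i) hGh
      exact ⟨p, hp, by intro hz; apply hq0 i; rw [hp, hz, mul_zero], h2, h1⟩
    choose p hqp hp0 hph hdn using hcof
    set P : Finset P2 := Finset.image p Finset.univ with hPdef
    set L := l - dd with hL
    have hP1 : ∀ r ∈ P, r ≠ 0 ∧ r.IsHomogeneous r.totalDegree ∧ r.totalDegree ≤ nmax - dd := by
      intro r hr
      obtain ⟨i, _, rfl⟩ := Finset.mem_image.mp hr
      have ht : (p i).totalDegree = n i - dd := (hph i).totalDegree (hp0 i)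
      refine ⟨hp0 i, by rw [ht]; exact hph i, by rw [ht]; have := hmax1 i; omega⟩
    have hP2 : ∃ f ∈ P, f ≠ 0 ∧ f.IsHomogeneous (nmin - dd) := by
      refine ⟨p imin, Finset.mem_image.mpr ⟨imin, Finset.mem_univ _, rfl⟩, hp0 imin, ?_⟩
      exact himin ▸ hph imin
    have hP3 : ∀ ℓ : P2, ℓ.IsHomogeneous 1 → ℓ ≠ 0 → ¬ ∀ r ∈ P, ℓ ∣ r := by
      intro ℓ h1 hℓ0 hall
      apply hGmax (dd + 1) (by omega)
      refine ⟨G * ℓ, by simpa using hGh.mul h1, fun i => ?_⟩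
      obtain ⟨w, hw⟩ := hall (p i) (Finset.mem_image.mpr ⟨i, Finset.mem_univ _, rfl⟩)
      exact ⟨w, by rw [hqp i, hw]; ring⟩
    have hlemH := lemH (nmin - dd) P (nmax - dd) L hP1 hP2 hP3
    have hG0 : G ≠ 0 := fun h => hq0 imin (by rw [hqp imin, h, zero_mul])
    have hVJL : Submodule.span ℂ
        {x : P2 | ∃ i, ∃ α β : ℕ, α + β + n i = l ∧ x = X 0 ^ α * X 1 ^ β * q i}
        = Submodule.map (LinearMap.mulLeft ℂ G) (JL P L) := by
      rw [JL, Submodule.map_span]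
      refine congrArg (Submodule.span ℂ) ?_
      ext x
      constructor
      · rintro ⟨i, α, β, hd, rfl⟩
        refine ⟨X 0 ^ α * X 1 ^ β * p i,
          ⟨p i, Finset.mem_image.mpr ⟨i, Finset.mem_univ _, rfl⟩, α, β, ?_, rfl⟩, ?_⟩
        · rw [(hph i).totalDegree (hp0 i)]
          have := hdn i
          have := hnl i
          omega
        · rw [LinearMap.mulLeft_apply, hqp i]; ring
      · rintro ⟨y, ⟨r, hr, α, β, hd, rfl⟩, rfl⟩
        obtain ⟨i, _, rfl⟩ := Finset.mem_image.mp hr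
        refine ⟨i, α, β, ?_, ?_⟩
        · rw [(hph i).totalDegree (hp0 i)] at hd
          have := hdn i
          have := hnl i
          omega
        · rw [LinearMap.mulLeft_apply, hqp i]; ring
    have hrkV : Module.finrank ℂ (Submodule.span ℂ
        {x : P2 | ∃ i, ∃ α β : ℕ, α + β + n i = l ∧ x = X 0 ^ α * X 1 ^ β * q i})
        = Module.finrank ℂ (JL P L) := by
      rw [hVJL]
      exact (LinearEquiv.finrank_eq
        (Submodule.equivMapOfInjective _ (mul_right_injective₀ hG0) _)).symm
    rw [hrk, hrkV] at hrank
    omega
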